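/- Explicit solution of T w = v: with T = −2i ∂/∂r − i(d−1)/|x| + tV (t ≠ 0), v(x) = V(x)|x|^{−(d−1)/2}, and V vanishing inside the unit ball, the function w(x) = t⁻¹ |x|^{−(d−1)/2}(1 − e^{−itW(x)/2}) satisfies T w = v; moreover w is compactly supported whenever V is. -/

import Mathlib

/-- Radial derivative `∂u/∂r = (x/|x|)·∇u`. -/
noncomputable def radialDeriv {d : ℕ} (u : EuclideanSpace ℝ (Fin d) → ℂ)
    (x : EuclideanSpace ℝ (Fin d)) : ℂ :=
  fderiv ℝ u x (‖x‖⁻¹ • x)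

/-- Explicit solution of `T w = v`: with `T = −2i ∂/∂r − i(d−1)/|x| + tV` (`t ≠ 0`),
`v = V |x|^{−(d−1)/2}`, `V` vanishing inside the unit ball with radial antiderivative `W`,
the function `w = t⁻¹|x|^{−(d−1)/2}(1 − e^{−itW/2})` satisfies `T w = v`; moreover `w` is
compactly supported whenever `W` is (which is the relevant case `V = ∂/∂r (ζ_n W̃)`). -/
theorem stmt13 (d : ℕ) (hd : 1 ≤ d) (t : ℝ) (ht : t ≠ 0)
    (V W : EuclideanSpace ℝ (Fin d) → ℝ)
    (hV0 : ∀ x : EuclideanSpace ℝ (Fin d), ‖x‖ < 1 → V x = 0)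
    (hW0 : ∀ x : EuclideanSpace ℝ (Fin d), ‖x‖ < 1 → W x = 0)
    (hWdiff : Differentiable ℝ W)
    (hWV : ∀ x : EuclideanSpace ℝ (Fin d), x ≠ 0 → fderiv ℝ W x (‖x‖⁻¹ • x) = V x)
    (w : EuclideanSpace ℝ (Fin d) → ℂ)
    (hw : ∀ x : EuclideanSpace ℝ (Fin d),
      w x = (t : ℂ)⁻¹ * ((‖x‖ ^ (-(((d : ℝ) - 1) / 2)) : ℝ) : ℂ) *
        (1 - Complex.exp (-Complex.I * t * W x / 2))) :
    (∀ x : EuclideanSpace ℝ (Fin d), x ≠ 0 →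
      -2 * Complex.I * radialDeriv w x - Complex.I * ((d : ℂ) - 1) * w x / (‖x‖ : ℂ)
          + (t : ℂ) * (V x : ℂ) * w x
        = (V x : ℂ) * ((‖x‖ ^ (-(((d : ℝ) - 1) / 2)) : ℝ) : ℂ)) ∧
    (HasCompactSupport W → HasCompactSupport w) := by
  set α : ℝ := -(((d : ℝ) - 1) / 2) with hα
  constructor
  · intro x hx
    have hr : (0:ℝ) < ‖x‖ := norm_pos_iff.mpr hx
    have hrne : ‖x‖ ≠ 0 := hr.ne'
    -- derivative of the norm
    have hnd : DifferentiableAt ℝ (fun y : EuclideanSpace ℝ (Fin d) => ‖y‖) x :=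
      (contDiffAt_norm ℝ hx).differentiableAt one_ne_zero
    set N := fderiv ℝ (fun y : EuclideanSpace ℝ (Fin d) => ‖y‖) x with hN
    have hNder : HasFDerivAt (fun y : EuclideanSpace ℝ (Fin d) => ‖y‖) N x := hnd.hasFDerivAt
    have hNu : N (‖x‖⁻¹ • x) = 1 := by
      rw [map_smul]
      have : N x = ‖x‖ := hnd.fderiv_norm_self
      simp [this, smul_eq_mul, inv_mul_cancel₀ hrne]
    -- derivative of ‖y‖ ^ α
    have hrpow : HasDerivAt (fun s : ℝ => s ^ α) (α * ‖x‖ ^ (α - 1)) ‖x‖ :=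
      Real.hasDerivAt_rpow_const (Or.inl hrne)
    have hH : HasFDerivAt (fun y : EuclideanSpace ℝ (Fin d) => ‖y‖ ^ α)
        ((α * ‖x‖ ^ (α - 1)) • N) x := hrpow.comp_hasFDerivAt x hNder
    have hHc : HasFDerivAt (fun y : EuclideanSpace ℝ (Fin d) => ((‖y‖ ^ α : ℝ) : ℂ))
        (Complex.ofRealCLM.comp ((α * ‖x‖ ^ (α - 1)) • N)) x :=
      Complex.ofRealCLM.hasFDerivAt.comp x hH
    -- derivative of W (complexified)
    have hWc : HasFDerivAt (fun y : EuclideanSpace ℝ (Fin d) => ((W y : ℝ) : ℂ))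
        (Complex.ofRealCLM.comp (fderiv ℝ W x)) x :=
      Complex.ofRealCLM.hasFDerivAt.comp x (hWdiff x).hasFDerivAt
    -- derivative of the exponential factor
    have hphi : HasFDerivAt (fun y : EuclideanSpace ℝ (Fin d) =>
        -Complex.I * t * W y / 2)
        ((-Complex.I * t / 2) • (Complex.ofRealCLM.comp (fderiv ℝ W x))) x := by
      have h1 : (fun y : EuclideanSpace ℝ (Fin d) => -Complex.I * t * W y / 2)
          = fun y => (-Complex.I * t / 2) * ((W y : ℝ) : ℂ) := by
        funext y; ring
      rw [h1]
      exact hWc.const_mul _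
    have hexp : HasFDerivAt (fun y : EuclideanSpace ℝ (Fin d) =>
        Complex.exp (-Complex.I * t * W y / 2))
        (Complex.exp (-Complex.I * t * W x / 2) •
          ((-Complex.I * t / 2) • (Complex.ofRealCLM.comp (fderiv ℝ W x)))) x := hphi.cexp
    have h1m : HasFDerivAt (fun y : EuclideanSpace ℝ (Fin d) =>
        (1 : ℂ) - Complex.exp (-Complex.I * t * W y / 2))
        (-(Complex.exp (-Complex.I * t * W x / 2) •
          ((-Complex.I * t / 2) • (Complex.ofRealCLM.comp (fderiv ℝ W x))))) x :=
      hexp.const_sub 1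
    have hmul := hHc.mul h1m
    have hwfull := hmul.const_mul ((t : ℂ)⁻¹)
    have hwe : w = fun y : EuclideanSpace ℝ (Fin d) => (t : ℂ)⁻¹ *
        (((‖y‖ ^ α : ℝ) : ℂ) * (1 - Complex.exp (-Complex.I * t * W y / 2))) := by
      funext y; rw [hw y]; ring
    have hrd : radialDeriv w x = (((t : ℂ)⁻¹) •
        (((‖x‖ ^ α : ℝ) : ℂ) • (-(Complex.exp (-Complex.I * t * W x / 2) •
          ((-Complex.I * t / 2) • (Complex.ofRealCLM.comp (fderiv ℝ W x)))))
          + (1 - Complex.exp (-Complex.I * t * W x / 2)) •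
            (Complex.ofRealCLM.comp ((α * ‖x‖ ^ (α - 1)) • N)))) (‖x‖⁻¹ • x) := by
      rw [radialDeriv, hwe]; exact congrArg (fun L => L (‖x‖⁻¹ • x)) hwfull.fderiv
    rw [hrd]
    simp only [ContinuousLinearMap.coe_smul', Pi.smul_apply, ContinuousLinearMap.add_apply,
      ContinuousLinearMap.neg_apply, ContinuousLinearMap.coe_comp', Function.comp_apply,
      Complex.ofRealCLM_apply, ContinuousLinearMap.smul_apply, hNu, hWV x hx,
      smul_eq_mul]
    rw [hw x]
    set E0 := Complex.exp (-Complex.I * t * W x / 2)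
    have hrC : (‖x‖ : ℂ) ≠ 0 := by exact_mod_cast hrne
    have hb : ((‖x‖ ^ (α - 1) : ℝ) : ℂ) = ((‖x‖ ^ α : ℝ) : ℂ) / (‖x‖ : ℂ) := by
      rw [Real.rpow_sub_one hrne]
      push_cast
      ring
    have hd1 : ((d : ℂ) - 1) = -2 * (α : ℂ) := by
      rw [hα]; push_cast; ring
    have htC : (t : ℂ) ≠ 0 := by exact_mod_cast ht
    rw [hd1]
    push_cast [Real.rpow_sub_one hrne]
    field_simp
    ring_nf
    simp only [Complex.I_sq]
    field_simp
    ring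
  · intro hWc
    apply hWc.mono
    intro y hy
    simp only [Function.mem_support] at hy ⊢
    intro h
    apply hy
    rw [hw y, h]
    push_cast
    simp
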